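/- Let $N$ be a Poisson random variable with mean $\lambda$, and let $m$ be a natural number with $m \leq \lambda/4$. Then $\mathbb{P}(N \leq m) \leq e^{-m g(\delta)}$ where $\delta = m/\lambda$ and $g(\delta) = \frac{1}{2} \cdot \frac{1-\delta}{\delta}$. In particular, $\mathbb{P}(N \leq m) \leq \frac{e^{-\lambda}(e\lambda)^m}{m^m}$. -/

import Mathlib

open Finset

private lemma geom_sum_bound (lam : ℝ) (hlam : 0 < lam) :
    ∀ m : ℕ, 4 * (m : ℝ) ≤ lam →
      (∑ k ∈ Finset.range (m+1), lam ^ k / (Nat.factorial k))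
        ≤ 4/3 * lam ^ m / (Nat.factorial m) := by
  intro m
  induction m with
  | zero => intro _; simp; norm_num
  | succ n ih =>
      intro h
      have hn : 4 * (n : ℝ) ≤ lam := by push_cast at h ⊢; linarith
      have ihn := ih hn
      rw [Finset.sum_range_succ]
      have hfact : (0:ℝ) < (Nat.factorial n : ℝ) := by positivity
      have hfact' : (0:ℝ) < (Nat.factorial (n+1) : ℝ) := by positivity
      have hpow : (0:ℝ) < lam ^ n := pow_pos hlam n
      -- 4/3 * lam^n / n! ≤ 1/3 * lam^(n+1)/(n+1)!
      have key : 4/3 * lam ^ n / (Nat.factorial n)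
          ≤ 1/3 * lam ^ (n+1) / (Nat.factorial (n+1)) := by
        rw [div_le_div_iff₀ hfact hfact']
        have hfs : ((Nat.factorial (n+1) : ℝ)) = ((n:ℝ)+1) * (Nat.factorial n) := by
          push_cast [Nat.factorial_succ]; ring
        rw [hfs, pow_succ]
        have h4 : 4 * ((n:ℝ)+1) ≤ lam := by push_cast at h; linarith
        nlinarith [mul_pos hpow hfact, mul_le_mul_of_nonneg_left h4
          (le_of_lt (mul_pos hpow hfact))]
      calc (∑ k ∈ Finset.range (n+1), lam ^ k / (Nat.factorial k))
            + lam ^ (n+1) / (Nat.factorial (n+1))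
          ≤ 4/3 * lam ^ n / (Nat.factorial n) + lam ^ (n+1) / (Nat.factorial (n+1)) := by
            linarith
        _ ≤ 1/3 * lam ^ (n+1) / (Nat.factorial (n+1))
              + lam ^ (n+1) / (Nat.factorial (n+1)) := by linarith
        _ = 4/3 * lam ^ (n+1) / (Nat.factorial (n+1)) := by ring

private lemma pow_div_factorial_le (m : ℕ) (hm : 1 ≤ m) :
    2 * (m : ℝ) ^ m ≤ Real.exp m * (Nat.factorial m) := by
  have hsum := Real.sum_le_exp_of_nonneg (x := (m:ℝ)) (by positivity) (m+1)
  have hterm : ∀ k ∈ Finset.range (m+1), (0:ℝ) ≤ (m:ℝ) ^ k / (Nat.factorial k) := by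
    intro k _; positivity
  -- the two terms k = m-1 and k = m each equal m^m/m!
  obtain ⟨n, rfl⟩ : ∃ n, m = n + 1 := ⟨m - 1, (Nat.succ_pred_eq_of_pos hm).symm⟩
  have hsub : ({n, n+1} : Finset ℕ) ⊆ Finset.range (n+1+1) := by
    intro k hk; simp at hk; rcases hk with rfl | rfl <;> simp [Finset.mem_range] <;> omega
  have h2 : ∑ k ∈ ({n, n+1} : Finset ℕ), ((n:ℝ)+1) ^ k / (Nat.factorial k)
      ≤ ∑ k ∈ Finset.range (n+1+1), ((n:ℝ)+1) ^ k / (Nat.factorial k) := by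
    apply Finset.sum_le_sum_of_subset_of_nonneg hsub
    intro k _ _; positivity
  have hne : n ≠ n + 1 := by omega
  rw [Finset.sum_pair hne] at h2
  have heq : ((n:ℝ)+1) ^ n / (Nat.factorial n) = ((n:ℝ)+1) ^ (n+1) / (Nat.factorial (n+1)) := by
    have hfs : ((Nat.factorial (n+1) : ℝ)) = ((n:ℝ)+1) * (Nat.factorial n) := by
      push_cast [Nat.factorial_succ]; ring
    rw [hfs, pow_succ]
    have h1 : (0:ℝ) < (Nat.factorial n : ℝ) := by positivity
    have h3 : (0:ℝ) < (n:ℝ)+1 := by positivity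
    field_simp
  have hfact' : (0:ℝ) < (Nat.factorial (n+1) : ℝ) := by positivity
  have : 2 * (((n:ℝ)+1) ^ (n+1) / (Nat.factorial (n+1))) ≤ Real.exp ((n:ℝ)+1) := by
    push_cast at hsum ⊢
    nlinarith [h2, hsum, heq]
  have h5 : 2 * ((n:ℝ)+1) ^ (n+1) / (Nat.factorial (n+1)) ≤ Real.exp ((n:ℝ)+1) := by
    rw [mul_div_assoc]; exact this
  have := (div_le_iff₀ hfact').mp h5
  push_cast at this ⊢
  linarith

private lemma log_le_half (t : ℝ) (ht : 4 ≤ t) : Real.log t ≤ (t - 1) / 2 := by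
  have ht0 : (0:ℝ) < t := by linarith
  have h1 : Real.log (t/4) ≤ t/4 - 1 := Real.log_le_sub_one_of_pos (by linarith)
  have h2 : Real.log t = Real.log 4 + Real.log (t/4) := by
    rw [← Real.log_mul (by norm_num) (by positivity)]
    congr 1; ring
  have h4 : Real.log 4 = 2 * Real.log 2 := by
    rw [show (4:ℝ) = 2^2 by norm_num, Real.log_pow]; push_cast; ring
  have := Real.log_two_lt_d9
  nlinarith

/-- Chernoff-type lower tail bound for a Poisson random variable `N` with
mean `λ`: for `m ≤ λ/4`, `P(N ≤ m) ≤ e^{-m g(δ)}` with `δ = m/λ`,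
`g(δ) = (1-δ)/(2δ)`, and in particular `P(N ≤ m) ≤ e^{-λ}(eλ)^m / m^m`.
Here `P(N ≤ m) = ∑_{k ≤ m} e^{-λ} λ^k / k!`. -/
theorem poisson_lower_tail (lam : ℝ) (hlam : 0 < lam) (m : ℕ) (hm : (m : ℝ) ≤ lam / 4) :
    (∑ k ∈ Finset.range (m+1), Real.exp (-lam) * lam ^ k / (Nat.factorial k))
        ≤ Real.exp (-((m : ℝ) * ((1 - (m : ℝ)/lam) / (2 * ((m : ℝ)/lam))))) ∧
    (∑ k ∈ Finset.range (m+1), Real.exp (-lam) * lam ^ k / (Nat.factorial k))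
        ≤ Real.exp (-lam) * (Real.exp 1 * lam) ^ m / (m : ℝ) ^ m := by
  have hexp : (0:ℝ) < Real.exp (-lam) := Real.exp_pos _
  have hsum_eq : (∑ k ∈ Finset.range (m+1), Real.exp (-lam) * lam ^ k / (Nat.factorial k))
      = Real.exp (-lam) * ∑ k ∈ Finset.range (m+1), lam ^ k / (Nat.factorial k) := by
    rw [Finset.mul_sum]; apply Finset.sum_congr rfl; intro k _; ring
  rcases Nat.eq_zero_or_pos m with rfl | hm1
  · constructor
    · have h0 : (∑ k ∈ Finset.range (0+1), Real.exp (-lam) * lam ^ k / (Nat.factorial k))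
          = Real.exp (-lam) := by simp
      rw [h0]
      simp only [Nat.cast_zero, zero_mul, neg_zero, Real.exp_zero]
      exact Real.exp_le_one_iff.mpr (by linarith)
    · simp [Real.exp_zero]
  · have hm1' : (1:ℝ) ≤ (m:ℝ) := by exact_mod_cast hm1
    have hmpos : (0:ℝ) < (m:ℝ) := by linarith
    have hgeom := geom_sum_bound lam hlam m (by linarith)
    have hpf := pow_div_factorial_le m hm1
    have hfact : (0:ℝ) < (Nat.factorial m : ℝ) := by positivity
    have hpowm : (0:ℝ) < (m:ℝ) ^ m := pow_pos hmpos m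
    have hpowl : (0:ℝ) < lam ^ m := pow_pos hlam m
    -- key: 4/3 * lam^m / m! ≤ (2/3) * exp m * lam^m / m^m
    have hkey : 4/3 * lam ^ m / (Nat.factorial m)
        ≤ 2/3 * (Real.exp m * lam ^ m / (m:ℝ) ^ m) := by
      rw [div_le_iff₀ hfact,
        show (2:ℝ)/3 * (Real.exp (m:ℝ) * lam ^ m / (m:ℝ) ^ m) * (Nat.factorial m)
          = (2/3) * (Real.exp (m:ℝ) * (Nat.factorial m) * lam ^ m) / (m:ℝ)^m from by ring,
        le_div_iff₀ hpowm]
      have h1 : 2 * (m:ℝ)^m * lam ^ m ≤ Real.exp m * (Nat.factorial m) * lam ^ m :=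
        mul_le_mul_of_nonneg_right hpf (le_of_lt hpowl)
      nlinarith
    have hS : (∑ k ∈ Finset.range (m+1), Real.exp (-lam) * lam ^ k / (Nat.factorial k))
        ≤ Real.exp (-lam) * (2/3 * (Real.exp m * lam ^ m / (m:ℝ) ^ m)) := by
      rw [hsum_eq]
      apply mul_le_mul_of_nonneg_left _ (le_of_lt hexp)
      calc (∑ k ∈ Finset.range (m+1), lam ^ k / (Nat.factorial k))
          ≤ 4/3 * lam ^ m / (Nat.factorial m) := hgeom
        _ ≤ 2/3 * (Real.exp m * lam ^ m / (m:ℝ) ^ m) := hkey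
    constructor
    · -- first bound
      have hmlam : (m:ℝ) * ((1 - (m:ℝ)/lam) / (2 * ((m:ℝ)/lam))) = (lam - m)/2 := by
        field_simp
      rw [hmlam]
      -- lam^m / m^m = exp (m * log (lam/m)) ≤ exp ((lam - m)/2)
      have ht : (4:ℝ) ≤ lam / m := by
        rw [le_div_iff₀ hmpos]; linarith
      have hlog := log_le_half (lam/m) ht
      have hratio : lam ^ m / (m:ℝ) ^ m = Real.exp ((m:ℝ) * Real.log (lam/m)) := by
        rw [Real.exp_nat_mul, Real.exp_log (by positivity), div_pow]
      have hmono : Real.exp ((m:ℝ) * Real.log (lam/m)) ≤ Real.exp ((lam - m)/2) := by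
        apply Real.exp_le_exp.mpr
        have := mul_le_mul_of_nonneg_left hlog (le_of_lt hmpos)
        calc (m:ℝ) * Real.log (lam/m) ≤ (m:ℝ) * ((lam/m - 1)/2) := this
          _ = (lam - m)/2 := by field_simp
      calc (∑ k ∈ Finset.range (m+1), Real.exp (-lam) * lam ^ k / (Nat.factorial k))
          ≤ Real.exp (-lam) * (2/3 * (Real.exp m * lam ^ m / (m:ℝ) ^ m)) := hS
        _ ≤ Real.exp (-lam) * (Real.exp m * Real.exp ((lam - m)/2)) := by
            apply mul_le_mul_of_nonneg_left _ (le_of_lt hexp)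
            rw [mul_div_assoc, hratio]
            nlinarith [Real.exp_pos ((m:ℝ) * Real.log (lam/m)), hmono,
              Real.exp_pos ((m:ℝ))]
        _ = Real.exp (-((lam - m)/2)) := by
            rw [← Real.exp_add, ← Real.exp_add]; congr 1; ring
    · -- second bound
      have hE : Real.exp (-lam) * (Real.exp 1 * lam) ^ m / (m:ℝ) ^ m
          = Real.exp (-lam) * (Real.exp m * lam ^ m / (m:ℝ) ^ m) := by
        rw [mul_pow, ← Real.exp_nat_mul, mul_one, mul_div_assoc]
      rw [hE]
      calc (∑ k ∈ Finset.range (m+1), Real.exp (-lam) * lam ^ k / (Nat.factorial k))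
          ≤ Real.exp (-lam) * (2/3 * (Real.exp m * lam ^ m / (m:ℝ) ^ m)) := hS
        _ ≤ Real.exp (-lam) * (Real.exp m * lam ^ m / (m:ℝ) ^ m) := by
            apply mul_le_mul_of_nonneg_left _ (le_of_lt hexp)
            have : (0:ℝ) ≤ Real.exp m * lam ^ m / (m:ℝ) ^ m := by positivity
            linarith
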